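/- arXiv:2310.14650 — 4 statements merged into one kernel-verified Lean document; each statement's English description precedes it below -/
import Mathlib

section
/- Let d ≥ 2 and let n_1, ..., n_d be nonzero integers (indexed cyclically, n_{s+d} = n_s) such that n_1 + n_2 + ... + n_d = 0 and every proper consecutive partial sum is nonzero, i.e. n_j + n_{j+1} + ... + n_{j+r} ≠ 0 for all 1 ≤ j ≤ d and 0 ≤ r with the sum containing fewer than d terms. For each j define A_j = 1 / (n_j · (n_j + n_{j+1}) · (n_j + n_{j+1} + n_{j+2}) ⋯ (n_j + n_{j+1} + ⋯ + n_{j+d-2})), a product of the first d−1 consecutive partial sums starting at index j. Then the cyclic sum ∑_{j=1}^{d} A_j = 0. -/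
open Polynomial Finset

lemma lag_sum_inv_zero {F : Type*} [Field F] (s : Finset ℕ) (v : ℕ → F)
    (hv : Set.InjOn v s) (hs : 2 ≤ s.card) :
    ∑ i ∈ s, ∏ j ∈ s.erase i, (v i - v j)⁻¹ = 0 := by
  have hne : s.Nonempty := Finset.card_pos.mp (by omega)
  have h1 := Lagrange.sum_basis hv hne
  have h2 := congrArg (fun p : F[X] => p.coeff (s.card - 1)) h1
  simp only [Polynomial.finset_sum_coeff] at h2
  have h3 : ∀ i ∈ s, (Lagrange.basis s v i).coeff (s.card - 1)
      = ∏ j ∈ s.erase i, (v i - v j)⁻¹ := by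
    intro i hi
    have hnd := Lagrange.natDegree_basis hv hi
    have : (Lagrange.basis s v i).coeff (s.card - 1) = (Lagrange.basis s v i).leadingCoeff := by
      rw [Polynomial.leadingCoeff, hnd]
    rw [this, Lagrange.basis, Polynomial.leadingCoeff_prod]
    refine Finset.prod_congr rfl fun j hj => ?_
    rw [Lagrange.basisDivisor, Polynomial.leadingCoeff_mul, Polynomial.leadingCoeff_C,
      (Polynomial.monic_X_sub_C (v j)).leadingCoeff, mul_one]
  rw [Finset.sum_congr rfl h3] at h2
  rw [h2, Polynomial.coeff_one, if_neg (by omega)]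

lemma lag_sum_inv_zero' {F : Type*} [Field F] (s : Finset ℕ) (v : ℕ → F)
    (hv : Set.InjOn v s) (hs : 2 ≤ s.card) :
    ∑ i ∈ s, ∏ j ∈ s.erase i, (v j - v i)⁻¹ = 0 := by
  have key := lag_sum_inv_zero s v hv hs
  have : ∑ i ∈ s, ∏ j ∈ s.erase i, (v j - v i)⁻¹
      = (-1 : F) ^ (s.card - 1) * ∑ i ∈ s, ∏ j ∈ s.erase i, (v i - v j)⁻¹ := by
    rw [Finset.mul_sum]
    refine Finset.sum_congr rfl fun i hi => ?_
    have : ∏ j ∈ s.erase i, (v j - v i)⁻¹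
        = ∏ j ∈ s.erase i, ((-1 : F) * (v i - v j)⁻¹) := by
      refine Finset.prod_congr rfl fun j hj => ?_
      rw [neg_one_mul, ← inv_neg, neg_sub]
    rw [this, Finset.prod_mul_distrib, Finset.prod_const,
      Finset.card_erase_of_mem hi]
  rw [this, key, mul_zero]

lemma sum_Icc_eq (d : ℕ) {M : Type*} [AddCommMonoid M] (f : ℤ → M) :
    ∑ j ∈ Finset.Icc (1:ℤ) (d:ℤ), f j = ∑ m ∈ Finset.range d, f ((m:ℤ)+1) := by
  refine Finset.sum_nbij' (fun z => (z-1).toNat) (fun m => (m:ℤ)+1) ?_ ?_ ?_ ?_ ?_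
  · intro a ha; simp only [Finset.mem_Icc] at ha; simp only [Finset.mem_range]; omega
  · intro a ha; simp only [Finset.mem_range] at ha; simp only [Finset.mem_Icc]; omega
  · intro a ha; simp only [Finset.mem_Icc] at ha; beta_reduce; omega
  · intro a ha; simp only [Finset.mem_range] at ha; beta_reduce; omega
  · intro a ha; simp only [Finset.mem_Icc] at ha
    beta_reduce; congr 1; omega

/-- **Lemma 6.1.** Cyclic sum of the reciprocal partial-sum products vanishes. -/
theorem cyclic_sum_of_reciprocal_partial_products_eq_zero
    (d : ℕ) (hd : 2 ≤ d) (n : ℤ → ℤ)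
    (hper : ∀ s : ℤ, n (s + d) = n s)
    (hzero : ∀ j : ℤ, 1 ≤ j → j ≤ d → n j ≠ 0)
    (hsum : ∑ j ∈ Finset.Icc (1 : ℤ) (d : ℤ), n j = 0)
    (hnr : ∀ (j : ℤ) (r : ℕ), 1 ≤ j → j ≤ d → r + 1 < d →
      (∑ i ∈ Finset.range (r + 1), n (j + i)) ≠ 0) :
    ∑ j ∈ Finset.Icc (1 : ℤ) (d : ℤ),
      (∏ s ∈ Finset.range (d - 1),
        ((∑ i ∈ Finset.range (s + 1), n (j + i) : ℤ) : ℚ))⁻¹ = 0 := by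
  set B : ℕ → ℤ := fun k => ∑ i ∈ Finset.range k, n ((i:ℤ)+1) with hB
  -- total sum is zero
  have hBd : B d = 0 := by
    rw [hB]
    rw [sum_Icc_eq d n] at hsum
    simpa [add_comm] using hsum
  -- partial sums in terms of B
  have hpart : ∀ m s : ℕ, (∑ i ∈ Finset.range (s+1), n (((m:ℤ)+1) + (i:ℤ)))
      = B (m+s+1) - B m := by
    intro m s
    rw [hB]
    rw [show B (m+s+1) - B m = ∑ i ∈ Finset.Ico m (m+s+1), n ((i:ℤ)+1) from
      (Finset.sum_Ico_eq_sub _ (by omega)).symm]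
    rw [Finset.sum_Ico_eq_sum_range]
    refine Finset.sum_congr (by congr 1; omega) fun i hi => ?_
    congr 1; push_cast; ring
  -- periodicity of B
  have hBper : ∀ k : ℕ, k ≤ d → B (k + d) = B k := by
    intro k hk
    simp only [hB]
    have hsplit : Finset.range (k + d) = Finset.Ico 0 d ∪ Finset.Ico d (k + d) := by
      rw [Finset.range_eq_Ico, Finset.Ico_union_Ico_eq_Ico (by omega) (by omega)]
    rw [hsplit, Finset.sum_union (by
      simp [Finset.disjoint_left]
      intro a h1 h2; omega)]
    have h1 : ∑ i ∈ Finset.Ico 0 d, n ((i:ℤ)+1) = 0 := by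
      rw [← Finset.range_eq_Ico]; exact hBd
    have h2 : ∑ i ∈ Finset.Ico d (k + d), n ((i:ℤ)+1)
        = ∑ i ∈ Finset.range k, n ((i:ℤ)+1) := by
      rw [show k + d = d + k by omega, Finset.sum_Ico_eq_sum_range,
        show d + k - d = k by omega]
      refine Finset.sum_congr rfl fun i hi => ?_
      rw [show ((d + i : ℕ) : ℤ) + 1 = ((i:ℤ)+1) + (d:ℤ) by push_cast; ring, hper]
    rw [h1, h2, zero_add]
  -- differences nonzero
  have hdiff : ∀ a b : ℕ, a < b → b < d → B b - B a ≠ 0 := by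
    intro a b hab hbd
    have := hnr ((a:ℤ)+1) (b - a - 1) (by omega) (by push_cast; omega) (by omega)
    rw [hpart a (b - a - 1)] at this
    rwa [show a + (b - a - 1) + 1 = b by omega] at this
  -- injectivity of casted B
  have hinj : Set.InjOn (fun k => ((B k : ℤ) : ℚ)) (Finset.range d) := by
    intro a ha b hb hab
    simp only [Finset.coe_range, Set.mem_Iio] at ha hb
    simp only [Int.cast_injective.eq_iff] at hab
    rcases lt_trichotomy a b with h | h | h
    · exact absurd (by omega : B b - B a = 0) (hdiff a b h hb)
    · exact h
    · exact absurd (by omega : B a - B b = 0) (hdiff b a h ha)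
  -- reindex the outer sum
  rw [sum_Icc_eq d]
  -- rewrite each product
  have hprod : ∀ m ∈ Finset.range d,
      (∏ s ∈ Finset.range (d - 1),
        ((∑ i ∈ Finset.range (s + 1), n (((m:ℤ)+1) + (i:ℤ)) : ℤ) : ℚ))⁻¹
      = ∏ k ∈ (Finset.range d).erase m, (((B k : ℤ):ℚ) - ((B m : ℤ):ℚ))⁻¹ := by
    intro m hm
    simp only [Finset.mem_range] at hm
    have hmain : ∏ s ∈ Finset.range (d - 1),
        ((∑ i ∈ Finset.range (s + 1), n (((m:ℤ)+1) + (i:ℤ)) : ℤ) : ℚ)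
        = ∏ k ∈ (Finset.range d).erase m, (((B k : ℤ):ℚ) - ((B m : ℤ):ℚ)) := by
      refine Finset.prod_nbij'
        (fun s => if m + 1 + s < d then m + 1 + s else m + 1 + s - d)
        (fun k => if m < k then k - m - 1 else k + d - m - 1) ?_ ?_ ?_ ?_ ?_
      · intro s hs; simp only [Finset.mem_range] at hs
        simp only [Finset.mem_erase, Finset.mem_range]
        split_ifs <;> omega
      · intro k hk; simp only [Finset.mem_erase, Finset.mem_range] at hk
        simp only [Finset.mem_range]
        split_ifs <;> omega
      · intro s hs; simp only [Finset.mem_range] at hs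
        split_ifs <;> omega
      · intro k hk; simp only [Finset.mem_erase, Finset.mem_range] at hk
        split_ifs <;> omega
      · intro s hs; simp only [Finset.mem_range] at hs
        rw [hpart m s]
        split_ifs with h
        · rw [show m + 1 + s = m + s + 1 by omega]; push_cast; ring
        · have : B (m + s + 1) = B (m + 1 + s - d) := by
            rw [show m + s + 1 = (m + 1 + s - d) + d by omega]
            exact hBper _ (by omega)
          rw [this]; push_cast; ring
    rw [hmain, ← Finset.prod_inv_distrib]
  rw [Finset.sum_congr rfl hprod]
  exact lag_sum_inv_zero' (Finset.range d) (fun k => ((B k : ℤ):ℚ)) hinj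
    (by rw [Finset.card_range]; omega)
end

section
/- Let L be an n × n complex matrix and α : ℝ → M_n(ℂ) a k-times continuously differentiable matrix-valued function. Then ∂_τ^k ( exp((t−τ)L) · α(τ) · exp(τL) ) = ∑_{ℓ=0}^{k} (−1)^ℓ (k choose ℓ) exp((t−τ)L) · ad_L^ℓ(α^{(k−ℓ)}(τ)) · exp(τL), where α^{(m)} denotes the m-th derivative of α and ad_L^ℓ is the ℓ-fold iterated commutator with L. -/
open Matrix NormedSpace

attribute [local instance] Matrix.linftyOpNormedAddCommGroup Matrix.linftyOpNormedSpace
  Matrix.linftyOpNormedRing Matrix.linftyOpNormedAlgebra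

section aux

variable {n : ℕ} (L : Matrix (Fin n) (Fin n) ℂ)

lemma smul_coe_eq (s : ℝ) : ((s : ℂ)) • L = s • L := by
  rw [← Complex.coe_algebraMap, algebraMap_smul]

lemma exp_coe_eq (s : ℝ) : exp ((s : ℂ) • L) = exp (s • L) := by
  rw [smul_coe_eq]

lemma hasDerivAt_exp_right (τ : ℝ) :
    HasDerivAt (fun s : ℝ => exp ((s : ℂ) • L)) (exp ((τ : ℂ) • L) * L) τ := by
  simp only [exp_coe_eq]
  exact hasDerivAt_exp_smul_const L τ

lemma hasDerivAt_exp_left (t τ : ℝ) :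
    HasDerivAt (fun s : ℝ => exp (((t : ℂ) - (s : ℂ)) • L))
      (-(L * exp (((t : ℂ) - (τ : ℂ)) • L))) τ := by
  have h : ∀ s : ℝ, exp (((t : ℂ) - (s : ℂ)) • L) = exp ((t - s) • L) := by
    intro s
    rw [← Complex.ofReal_sub, exp_coe_eq]
  simp only [h]
  have h1 : HasDerivAt (fun u : ℝ => exp (u • L)) (L * exp ((t - τ) • L)) (t - τ) :=
    hasDerivAt_exp_smul_const' L (t - τ)
  have h2 : HasDerivAt (fun s : ℝ => t - s) (-1 : ℝ) τ := by
    simpa using (hasDerivAt_id τ).const_sub t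
  have := h1.scomp τ h2
  simp [Function.comp_def] at this
  exact this

end aux

section aux2

variable {n : ℕ} {L : Matrix (Fin n) (Fin n) ℂ}

lemma hasDerivAt_ad_iterate (ℓ : ℕ) {g : ℝ → Matrix (Fin n) (Fin n) ℂ}
    {g' : Matrix (Fin n) (Fin n) ℂ} {τ : ℝ} (hg : HasDerivAt g g' τ) :
    HasDerivAt (fun s => (fun X => L * X - X * L)^[ℓ] (g s))
      ((fun X => L * X - X * L)^[ℓ] g') τ := by
  induction ℓ generalizing g g' with
  | zero => simpa using hg
  | succ m ih =>
    have h := ih hg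
    simp only [Function.iterate_succ_apply']
    exact (h.const_mul L).sub (h.mul_const L)

lemma hasDerivAt_conj (L : Matrix (Fin n) (Fin n) ℂ) (t : ℝ) {B : ℝ → Matrix (Fin n) (Fin n) ℂ}
    {B' : Matrix (Fin n) (Fin n) ℂ} {τ : ℝ} (hB : HasDerivAt B B' τ) :
    HasDerivAt (fun s : ℝ => exp (((t : ℂ) - (s : ℂ)) • L) * B s * exp ((s : ℂ) • L))
      (exp (((t : ℂ) - (τ : ℂ)) • L) * (B' - (L * B τ - B τ * L)) * exp ((τ : ℂ) • L)) τ := by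
  have h1 := hasDerivAt_exp_left L t τ
  have h2 := hasDerivAt_exp_right L τ
  have h := (h1.mul hB).mul h2
  set E1 := exp (((t : ℂ) - (τ : ℂ)) • L) with hE1
  set E2 := exp ((τ : ℂ) • L) with hE2
  have hc1 : L * E1 = E1 * L :=
    (((Commute.refl L).smul_right _).exp_right).eq
  have hc2 : E2 * L = L * E2 :=
    ((((Commute.refl L).smul_right _).exp_right).eq).symm
  refine h.congr_deriv ?_
  simp only [Pi.mul_apply, ← hE1]
  rw [hc1, hc2]
  noncomm_ring

end aux2

lemma pascal_sum {M : Type*} [AddCommGroup M] [Module ℂ M] (k : ℕ) (A : ℕ → M) :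
    ∑ ℓ ∈ Finset.range (k+1), ((((-1:ℂ)^ℓ * (Nat.choose k ℓ : ℂ)) • A ℓ)
      - (((-1:ℂ)^ℓ * (Nat.choose k ℓ : ℂ)) • A (ℓ+1)))
    = ∑ ℓ ∈ Finset.range (k+2), ((-1:ℂ)^ℓ * (Nat.choose (k+1) ℓ : ℂ)) • A ℓ := by
  rw [Finset.sum_sub_distrib,
    Finset.sum_range_succ' (fun ℓ => ((-1:ℂ)^ℓ * (Nat.choose (k+1) ℓ:ℂ)) • A ℓ) (k+1)]
  have h1 : ∀ i, ((-1:ℂ)^(i+1) * (Nat.choose (k+1) (i+1):ℂ)) • A (i+1)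
      = ((-1:ℂ)^(i+1) * (Nat.choose k (i+1):ℂ)) • A (i+1)
        - ((-1:ℂ)^i * (Nat.choose k i:ℂ)) • A (i+1) := by
    intro i
    rw [← sub_smul]
    congr 1
    push_cast [Nat.choose_succ_succ]
    ring
  simp only [h1]
  rw [Finset.sum_sub_distrib]
  have h2 : ∑ i ∈ Finset.range (k+1), ((-1:ℂ)^(i+1) * (Nat.choose k (i+1):ℂ)) • A (i+1)
      = ∑ ℓ ∈ Finset.range (k+1), ((-1:ℂ)^ℓ * (Nat.choose k ℓ:ℂ)) • A ℓ
        - ((-1:ℂ)^0 * (Nat.choose k 0:ℂ)) • A 0 := by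
    rw [eq_sub_iff_add_eq,
      ← Finset.sum_range_succ' (fun ℓ => ((-1:ℂ)^ℓ * (Nat.choose k ℓ:ℂ)) • A ℓ) (k+1),
      Finset.sum_range_succ]
    simp
  rw [h2]
  simp
  abel

lemma main_aux {n : ℕ} (L : Matrix (Fin n) (Fin n) ℂ) (α : ℝ → Matrix (Fin n) (Fin n) ℂ)
    (t : ℝ) : ∀ k : ℕ, ContDiff ℝ (k : ℕ∞) α → ∀ τ : ℝ,
    iteratedDeriv k
      (fun s : ℝ => exp (((t : ℂ) - (s : ℂ)) • L) * α s * exp ((s : ℂ) • L)) τ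
    = ∑ ℓ ∈ Finset.range (k + 1),
        (((-1 : ℂ) ^ ℓ) * (Nat.choose k ℓ : ℂ)) •
          (exp (((t : ℂ) - (τ : ℂ)) • L) *
            ((fun X => L * X - X * L)^[ℓ] (iteratedDeriv (k - ℓ) α τ)) *
            exp ((τ : ℂ) • L)) := by
  intro k
  induction k with
  | zero => intro _ τ; simp
  | succ k ih =>
    intro hα τ
    have hαk : ContDiff ℝ (k : ℕ∞) α := hα.of_le (by exact_mod_cast Nat.le_succ k)
    have hder : ∀ ℓ ∈ Finset.range (k+1), HasDerivAt (fun σ : ℝ =>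
        (((-1 : ℂ) ^ ℓ) * (Nat.choose k ℓ : ℂ)) •
          (exp (((t : ℂ) - (σ : ℂ)) • L) *
            ((fun X => L * X - X * L)^[ℓ] (iteratedDeriv (k - ℓ) α σ)) *
            exp ((σ : ℂ) • L)))
        ((((-1 : ℂ) ^ ℓ) * (Nat.choose k ℓ : ℂ)) •
          (exp (((t : ℂ) - (τ : ℂ)) • L) *
            (((fun X => L * X - X * L)^[ℓ] (iteratedDeriv (k - ℓ + 1) α τ))
              - (fun X => L * X - X * L)^[ℓ+1] (iteratedDeriv (k - ℓ) α τ)) *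
            exp ((τ : ℂ) • L))) τ := by
      intro ℓ _
      have hdiff : DifferentiableAt ℝ (iteratedDeriv (k - ℓ) α) τ := by
        exact (hα.differentiable_iteratedDeriv (k - ℓ)
          (by
            rw [show ((((k+1):ℕ)  : ℕ∞) : WithTop ℕ∞) = (((k+1):ℕ) : WithTop ℕ∞) by norm_cast]
            exact_mod_cast Nat.lt_succ_of_le (Nat.sub_le k ℓ))).differentiableAt
      have hg : HasDerivAt (iteratedDeriv (k - ℓ) α) (iteratedDeriv (k - ℓ + 1) α τ) τ := by
        rw [iteratedDeriv_succ]
        exact hdiff.hasDerivAt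
      have h1 := hasDerivAt_conj L t (hasDerivAt_ad_iterate (L := L) ℓ hg)
      have h2 := h1.const_smul (((-1 : ℂ) ^ ℓ) * (Nat.choose k ℓ : ℂ))
      refine h2.congr_deriv ?_
      rw [Function.iterate_succ_apply']
    have hsum := HasDerivAt.fun_sum hder
    rw [iteratedDeriv_succ]
    have heq : iteratedDeriv k
        (fun s : ℝ => exp (((t : ℂ) - (s : ℂ)) • L) * α s * exp ((s : ℂ) • L))
      = fun σ : ℝ => ∑ ℓ ∈ Finset.range (k + 1),
        (((-1 : ℂ) ^ ℓ) * (Nat.choose k ℓ : ℂ)) •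
          (exp (((t : ℂ) - (σ : ℂ)) • L) *
            ((fun X => L * X - X * L)^[ℓ] (iteratedDeriv (k - ℓ) α σ)) *
            exp ((σ : ℂ) • L)) := funext fun σ => ih hαk σ
    rw [heq, hsum.deriv]
    -- now the combinatorial identity
    set E1 := exp (((t : ℂ) - (τ : ℂ)) • L)
    set E2 := exp ((τ : ℂ) • L)
    set A : ℕ → Matrix (Fin n) (Fin n) ℂ := fun ℓ =>
      E1 * ((fun X => L * X - X * L)^[ℓ] (iteratedDeriv (k + 1 - ℓ) α τ)) * E2 with hA
    have hterm : ∀ ℓ ∈ Finset.range (k+1),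
        (((-1 : ℂ) ^ ℓ) * (Nat.choose k ℓ : ℂ)) •
          (E1 * (((fun X => L * X - X * L)^[ℓ] (iteratedDeriv (k - ℓ + 1) α τ))
              - (fun X => L * X - X * L)^[ℓ+1] (iteratedDeriv (k - ℓ) α τ)) * E2)
        = (((-1 : ℂ) ^ ℓ) * (Nat.choose k ℓ : ℂ)) • A ℓ
          - (((-1 : ℂ) ^ ℓ) * (Nat.choose k ℓ : ℂ)) • A (ℓ+1) := by
      intro ℓ hℓ
      rw [Finset.mem_range, Nat.lt_succ_iff] at hℓ
      have e1 : k - ℓ + 1 = k + 1 - ℓ := (Nat.succ_sub hℓ).symm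
      have e2 : k - ℓ = k + 1 - (ℓ + 1) := (Nat.succ_sub_succ k ℓ).symm
      rw [mul_sub, sub_mul, smul_sub, hA, e1, e2]
    rw [Finset.sum_congr rfl hterm, pascal_sum k A]

/-- Lemma A.1 (matrix version): Leibniz-type formula
`∂_τ^k(e^{(t-τ)L} α(τ) e^{τL}) = ∑_{ℓ=0}^{k} (-1)^ℓ (k choose ℓ) e^{(t-τ)L} ad_L^ℓ(α^{(k-ℓ)}(τ)) e^{τL}`. -/
theorem iteratedDeriv_conjugated_exp_time_dependent
    (n : ℕ) (L : Matrix (Fin n) (Fin n) ℂ) (α : ℝ → Matrix (Fin n) (Fin n) ℂ)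
    (k : ℕ) (hα : ContDiff ℝ (k : ℕ∞) α) (t τ : ℝ) :
    iteratedDeriv k
      (fun s : ℝ => exp (((t : ℂ) - (s : ℂ)) • L) * α s * exp ((s : ℂ) • L)) τ
    = ∑ ℓ ∈ Finset.range (k + 1),
        (((-1 : ℂ) ^ ℓ) * (Nat.choose k ℓ : ℂ)) •
          (exp (((t : ℂ) - (τ : ℂ)) • L) *
            ((fun X => L * X - X * L)^[ℓ] (iteratedDeriv (k - ℓ) α τ)) *
            exp ((τ : ℂ) • L)) := by
  exact main_aux L α t k hα τ
end

section
/- Let L and α be n × n complex matrices, ω > 0, m a nonzero integer, t > 0, u_0 ∈ ℂ^n, and r ≥ 1. Then ∫_0^t e^{iωτm} exp((t−τ)L) α exp(τL) u_0 dτ = ∑_{k=0}^{r−1} (iωm)^{−(k+1)} [ e^{iωtm} ad_L^k(α) exp(tL) − exp(tL) ad_L^k(α) ] u_0 + (iωm)^{−r} ∫_0^t e^{iωτm} exp((t−τ)L) ad_L^r(α) exp(τL) u_0 dτ. -/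
open Matrix NormedSpace

attribute [local instance] Matrix.linftyOpNormedAddCommGroup Matrix.linftyOpNormedSpace
  Matrix.linftyOpNormedRing Matrix.linftyOpNormedAlgebra

noncomputable def mvCLM (n : ℕ) (u₀ : Fin n → ℂ) :
    Matrix (Fin n) (Fin n) ℂ →L[ℂ] (Fin n → ℂ) :=
  LinearMap.toContinuousLinearMap
    { toFun := fun M => M.mulVec u₀
      map_add' := fun A B => Matrix.add_mulVec A B u₀
      map_smul' := fun a A => Matrix.smul_mulVec a A u₀ }

lemma integrand_continuous (n : ℕ) (L β : Matrix (Fin n) (Fin n) ℂ) (ω : ℝ) (m : ℤ)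
    (t : ℝ) (u₀ : Fin n → ℂ) :
    Continuous (fun τ : ℝ => Complex.exp (Complex.I * ω * τ * m) •
      ((exp (((t : ℂ) - (τ : ℂ)) • L) * β * exp ((τ : ℂ) • L)).mulVec u₀)) := by
  have hofReal : Continuous (fun τ : ℝ => (τ : ℂ)) := Complex.continuous_ofReal
  have h1 : Continuous (fun τ : ℝ => Complex.exp (Complex.I * ω * τ * m)) := by
    apply Complex.continuous_exp.comp; continuity
  have hB : Continuous (fun τ : ℝ => exp ((τ : ℂ) • L)) :=
    exp_continuous.comp (hofReal.smul continuous_const)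
  have hA : Continuous (fun τ : ℝ => exp (((t : ℂ) - (τ : ℂ)) • L)) :=
    exp_continuous.comp (((continuous_const.sub hofReal)).smul continuous_const)
  exact h1.smul ((mvCLM n u₀).continuous.comp ((hA.mul continuous_const).mul hB))

lemma key_hasDerivAt (n : ℕ) (L β : Matrix (Fin n) (Fin n) ℂ) (ω : ℝ) (m : ℤ)
    (t : ℝ) (u₀ : Fin n → ℂ) (τ : ℝ) :
    HasDerivAt (fun τ : ℝ => Complex.exp (Complex.I * ω * τ * m) •
        ((exp (((t : ℂ) - (τ : ℂ)) • L) * β * exp ((τ : ℂ) • L)).mulVec u₀))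
      ((Complex.I * ω * m) • (Complex.exp (Complex.I * ω * τ * m) •
          ((exp (((t : ℂ) - (τ : ℂ)) • L) * β * exp ((τ : ℂ) • L)).mulVec u₀))
        - Complex.exp (Complex.I * ω * τ * m) •
          ((exp (((t : ℂ) - (τ : ℂ)) • L) * (L * β - β * L) * exp ((τ : ℂ) • L)).mulVec u₀))
      τ := by
  set c : ℂ := Complex.I * ω * m with hc
  have hg : ∀ z : ℂ, HasDerivAt (fun z : ℂ => Complex.exp (c * z) •
      (mvCLM n u₀ (exp (((t : ℂ) - z) • L) * β * exp (z • L))))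
      (c • (Complex.exp (c * z) •
          (mvCLM n u₀ (exp (((t : ℂ) - z) • L) * β * exp (z • L))))
        - Complex.exp (c * z) •
          (mvCLM n u₀ (exp (((t : ℂ) - z) • L) * (L * β - β * L) * exp (z • L)))) z := by
    intro z
    have hA : HasDerivAt (fun z : ℂ => exp (((t : ℂ) - z) • L))
        ((-1 : ℂ) • (exp (((t : ℂ) - z) • L) * L)) z := by
      have := (hasDerivAt_exp_smul_const (𝕂 := ℂ) L ((t : ℂ) - z)).scomp z
        ((hasDerivAt_id z).const_sub (t : ℂ))
      exact this
    have hB : HasDerivAt (fun z : ℂ => exp (z • L)) (exp (z • L) * L) z :=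
      hasDerivAt_exp_smul_const L z
    have hG : HasDerivAt (fun z : ℂ => exp (((t : ℂ) - z) • L) * β * exp (z • L))
        (((-1 : ℂ) • (exp (((t : ℂ) - z) • L) * L)) * β * exp (z • L)
          + exp (((t : ℂ) - z) • L) * β * (exp (z • L) * L)) z :=
      (hA.mul_const β).mul hB
    have hc' : HasDerivAt (fun z : ℂ => Complex.exp (c * z)) (Complex.exp (c * z) * c) z := by
      simpa using ((hasDerivAt_id z).const_mul c).cexp
    have hΦG : HasDerivAt (fun z : ℂ => mvCLM n u₀ (exp (((t : ℂ) - z) • L) * β * exp (z • L)))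
        (mvCLM n u₀ (((-1 : ℂ) • (exp (((t : ℂ) - z) • L) * L)) * β * exp (z • L)
          + exp (((t : ℂ) - z) • L) * β * (exp (z • L) * L))) z :=
      (mvCLM n u₀).hasFDerivAt.comp_hasDerivAt z hG
    have := hc'.smul hΦG
    refine this.congr_deriv ?_
    have hcomm : exp (z • L) * L = L * exp (z • L) :=
      ((Commute.refl L).smul_left z).exp_left
    have hmat : exp (((t : ℂ) - z) • L) * (L * β - β * L) * exp (z • L)
        = (exp (((t : ℂ) - z) • L) * L) * β * exp (z • L)
          - exp (((t : ℂ) - z) • L) * β * (exp (z • L) * L) := by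
      rw [hcomm]; noncomm_ring
    rw [hmat, map_sub, map_add]
    simp only [smul_mul_assoc, _root_.map_smul, Function.comp_apply]
    module
  have hτeq : ∀ x : ℝ, Complex.I * ω * x * m = c * x := by
    intro x; rw [hc]; ring
  have h2 := HasDerivAt.scomp τ (hg ((τ : ℝ) : ℂ)) Complex.ofRealCLM.hasDerivAt
  simp only [Function.comp, Complex.ofRealCLM_apply, Complex.ofReal_one, one_smul] at h2
  simp only [hτeq]
  exact h2

lemma key_integral (n : ℕ) (L β : Matrix (Fin n) (Fin n) ℂ) (ω : ℝ) (hω : 0 < ω)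
    (m : ℤ) (hm : m ≠ 0) (t : ℝ) (u₀ : Fin n → ℂ) :
    (∫ τ in (0:ℝ)..t, Complex.exp (Complex.I * ω * τ * m) •
        ((exp (((t : ℂ) - (τ : ℂ)) • L) * β * exp ((τ : ℂ) • L)).mulVec u₀))
    = (Complex.I * ω * m)⁻¹ •
        ((Complex.exp (Complex.I * ω * t * m) • ((β * exp ((t : ℂ) • L)).mulVec u₀))
          - (exp ((t : ℂ) • L) * β).mulVec u₀)
      + (Complex.I * ω * m)⁻¹ •
        ∫ τ in (0:ℝ)..t, Complex.exp (Complex.I * ω * τ * m) •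
          ((exp (((t : ℂ) - (τ : ℂ)) • L) * (L * β - β * L) * exp ((τ : ℂ) • L)).mulVec u₀) := by
  set c : ℂ := Complex.I * ω * m with hc
  have hc0 : c ≠ 0 := by
    refine mul_ne_zero (mul_ne_zero Complex.I_ne_zero ?_) ?_
    · exact_mod_cast hω.ne'
    · exact_mod_cast hm
  set f : ℝ → (Fin n → ℂ) := fun τ => Complex.exp (Complex.I * ω * τ * m) •
      ((exp (((t : ℂ) - (τ : ℂ)) • L) * β * exp ((τ : ℂ) • L)).mulVec u₀) with hf
  set g : ℝ → (Fin n → ℂ) := fun τ => Complex.exp (Complex.I * ω * τ * m) •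
      ((exp (((t : ℂ) - (τ : ℂ)) • L) * (L * β - β * L) * exp ((τ : ℂ) • L)).mulVec u₀)
    with hg
  have hfc : Continuous f := integrand_continuous n L β ω m t u₀
  have hgc : Continuous g := integrand_continuous n L (L * β - β * L) ω m t u₀
  have hint : IntervalIntegrable (fun τ => c • f τ - g τ) MeasureTheory.volume 0 t :=
    (show Continuous (fun τ => c • f τ - g τ) from
      ((continuous_const : Continuous fun _ : ℝ => c).smul hfc).sub hgc).intervalIntegrable 0 t
  have hFTC : (∫ τ in (0:ℝ)..t, (c • f τ - g τ)) = f t - f 0 :=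
    intervalIntegral.integral_eq_sub_of_hasDerivAt
      (fun τ _ => key_hasDerivAt n L β ω m t u₀ τ) hint
  have hsplit : (∫ τ in (0:ℝ)..t, (c • f τ - g τ))
      = c • (∫ τ in (0:ℝ)..t, f τ) - ∫ τ in (0:ℝ)..t, g τ := by
    rw [intervalIntegral.integral_sub
      ((show Continuous (fun τ => c • f τ) from
        (continuous_const : Continuous fun _ : ℝ => c).smul hfc).intervalIntegrable 0 t)
      (hgc.intervalIntegrable 0 t), intervalIntegral.integral_smul]
  have hft : f t = Complex.exp (Complex.I * ω * t * m) • ((β * exp ((t : ℂ) • L)).mulVec u₀) := by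
    simp [hf, sub_self, exp_zero]
  have hf0 : f 0 = (exp ((t : ℂ) • L) * β).mulVec u₀ := by
    simp [hf, exp_zero]
  have h3 : c • (∫ τ in (0:ℝ)..t, f τ)
      = (Complex.exp (Complex.I * ω * t * m) • ((β * exp ((t : ℂ) • L)).mulVec u₀)
          - (exp ((t : ℂ) • L) * β).mulVec u₀) + ∫ τ in (0:ℝ)..t, g τ := by
    rw [← hft, ← hf0, ← hFTC, hsplit]; abel
  calc (∫ τ in (0:ℝ)..t, f τ)
      = c⁻¹ • (c • ∫ τ in (0:ℝ)..t, f τ) := by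
        rw [smul_smul, inv_mul_cancel₀ hc0, one_smul]
    _ = _ := by rw [h3, smul_add]

/-- Identity (5.1) in the matrix setting: repeated integration by parts for the
oscillatory Duhamel integral. -/
theorem oscillatory_integral_integration_by_parts
    (n : ℕ) (L α : Matrix (Fin n) (Fin n) ℂ) (ω : ℝ) (hω : 0 < ω)
    (m : ℤ) (hm : m ≠ 0) (t : ℝ) (ht : 0 < t) (u₀ : Fin n → ℂ) (r : ℕ) (hr : 1 ≤ r) :
    (∫ τ in (0:ℝ)..t, Complex.exp (Complex.I * ω * τ * m) •
        ((exp (((t : ℂ) - (τ : ℂ)) • L) * α * exp ((τ : ℂ) • L)).mulVec u₀))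
    = (∑ k ∈ Finset.range r,
        ((Complex.I * ω * m) ^ (k + 1))⁻¹ •
          ((Complex.exp (Complex.I * ω * t * m) •
              (((fun X => L * X - X * L)^[k] α) * exp ((t : ℂ) • L)).mulVec u₀)
            - (exp ((t : ℂ) • L) * ((fun X => L * X - X * L)^[k] α)).mulVec u₀))
      + ((Complex.I * ω * m) ^ r)⁻¹ •
          ∫ τ in (0:ℝ)..t, Complex.exp (Complex.I * ω * τ * m) •
            ((exp (((t : ℂ) - (τ : ℂ)) • L) * ((fun X => L * X - X * L)^[r] α) *
              exp ((τ : ℂ) • L)).mulVec u₀) := by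
  induction r, hr using Nat.le_induction with
  | base =>
    rw [key_integral n L α ω hω m hm t u₀]
    simp [Function.iterate_one, pow_one]
  | succ r hr ih =>
    rw [ih, key_integral n L ((fun X => L * X - X * L)^[r] α) ω hω m hm t u₀,
      Finset.sum_range_succ]
    have hiter : (fun X => L * X - X * L)^[r + 1] α
        = L * ((fun X => L * X - X * L)^[r] α) - ((fun X => L * X - X * L)^[r] α) * L := by
      rw [Function.iterate_succ_apply']
    rw [hiter, smul_add, smul_smul, smul_smul, ← mul_inv, ← pow_succ, ← add_assoc]
end

section
/- Let L, α be n × n complex matrices that commute with each other's iterated commutators as needed, ω > 0, m a nonzero integer, and u_0 ∈ ℂ^n. Define I(ω) = ∫_0^t e^{iωmτ} exp((t−τ)L) α exp(τL) u_0 dτ. Then ‖I(ω)‖ ≤ (1/(ω|m|)) ( ‖ad_L^0(α) exp(tL) u_0‖ + ‖exp(tL) α u_0‖ + t · max_{τ∈[0,t]} ‖exp((t−τ)L) ad_L^1(α) exp(τL) u_0‖ ), so I(ω) = O(ω^{−1}) as ω → ∞ with constant independent of ω. -/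
open Matrix NormedSpace

attribute [local instance] Matrix.linftyOpNormedAddCommGroup Matrix.linftyOpNormedSpace
  Matrix.linftyOpNormedRing Matrix.linftyOpNormedAlgebra

namespace OscAux

variable {n : ℕ}

/-- `mulVec u₀` as a continuous linear map in the matrix argument. -/
noncomputable def mv (u₀ : Fin n → ℂ) : Matrix (Fin n) (Fin n) ℂ →L[ℂ] (Fin n → ℂ) :=
  LinearMap.toContinuousLinearMap
    { toFun := fun M => M.mulVec u₀
      map_add' := fun M N => Matrix.add_mulVec M N u₀
      map_smul' := fun c M => Matrix.smul_mulVec c M u₀ }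

@[simp] lemma mv_apply (u₀ : Fin n → ℂ) (M : Matrix (Fin n) (Fin n) ℂ) :
    mv u₀ M = M.mulVec u₀ := rfl

lemma comp_ofReal' {F : Type*} [NormedAddCommGroup F] [NormedSpace ℂ F]
    {e : ℂ → F} {e' : F} {z : ℝ} (hf : HasDerivAt e e' (z : ℂ)) :
    HasDerivAt (fun y : ℝ => e y) e' z := by
  simpa [Function.comp_def] using hf.scomp z Complex.ofRealCLM.hasDerivAt

lemma hasDerivAt_right (L : Matrix (Fin n) (Fin n) ℂ) (τ : ℝ) :
    HasDerivAt (fun τ : ℝ => exp ((τ : ℂ) • L)) (L * exp ((τ : ℂ) • L)) τ :=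
  comp_ofReal' (hasDerivAt_exp_smul_const' L (τ : ℂ))

lemma hasDerivAt_left (L : Matrix (Fin n) (Fin n) ℂ) (t τ : ℝ) :
    HasDerivAt (fun τ : ℝ => exp (((t : ℂ) - (τ : ℂ)) • L))
      (-(exp (((t : ℂ) - (τ : ℂ)) • L) * L)) τ := by
  have h2 : HasDerivAt (fun z : ℂ => (t : ℂ) - z) (-1) (τ : ℂ) :=
    (hasDerivAt_id _).const_sub (t : ℂ)
  have h1 : HasDerivAt (fun z : ℂ => exp (((t : ℂ) - z) • L))
      (-(exp (((t : ℂ) - (τ : ℂ)) • L) * L)) (τ : ℂ) := by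
    have := (hasDerivAt_exp_smul_const L ((t : ℂ) - (τ : ℂ))).scomp (τ : ℂ) h2
    simp only [Function.comp_def, neg_smul, one_smul] at this
    exact this
  exact comp_ofReal' h1

end OscAux

open OscAux

/-- The `d = 1` nonresonant decay estimate: one integration by parts bounds the
oscillatory Duhamel integral by `O(ω⁻¹)`. -/
theorem oscillatory_integral_one_dim_matrix_bound
    (n : ℕ) (L α : Matrix (Fin n) (Fin n) ℂ) (ω : ℝ) (hω : 0 < ω)
    (m : ℤ) (hm : m ≠ 0) (t : ℝ) (ht : 0 < t) (u₀ : Fin n → ℂ) :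
    ‖∫ τ in (0:ℝ)..t, Complex.exp (Complex.I * ω * m * τ) •
        ((exp (((t : ℂ) - (τ : ℂ)) • L) * α * exp ((τ : ℂ) • L)).mulVec u₀)‖
      ≤ (1 / (ω * |(m : ℝ)|)) *
          (‖(α * exp ((t : ℂ) • L)).mulVec u₀‖
            + ‖(exp ((t : ℂ) • L) * α).mulVec u₀‖
            + t * ⨆ τ ∈ Set.Icc (0:ℝ) t,
                ‖(exp (((t : ℂ) - (τ : ℂ)) • L) * (L * α - α * L) *
                    exp ((τ : ℂ) • L)).mulVec u₀‖) := by
  set a : ℂ := Complex.I * ω * m with ha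
  have ha0 : a ≠ 0 := by
    simp only [ha]
    exact mul_ne_zero (mul_ne_zero Complex.I_ne_zero
      (by exact_mod_cast Complex.ofReal_ne_zero.2 hω.ne')) (by exact_mod_cast hm)
  set c : ℂ := a⁻¹ with hc
  set φ : ℝ → ℂ := fun τ => Complex.exp (a * τ) with hφdef
  set g : ℝ → Matrix (Fin n) (Fin n) ℂ := fun τ => exp (((t : ℂ) - (τ : ℂ)) • L) with hgdef
  set f : ℝ → Matrix (Fin n) (Fin n) ℂ := fun τ => exp ((τ : ℂ) • L) with hfdef
  set F : ℝ → (Fin n → ℂ) := fun τ => (g τ * α * f τ).mulVec u₀ with hFdef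
  set F' : ℝ → (Fin n → ℂ) := fun τ => -((g τ * (L * α - α * L) * f τ).mulVec u₀) with hF'def
  -- derivative of φ
  have hφ : ∀ τ : ℝ, HasDerivAt φ (a * φ τ) τ := by
    intro τ
    have h1 : HasDerivAt (fun z : ℂ => Complex.exp (a * z))
        (a * Complex.exp (a * (τ : ℂ))) (τ : ℂ) := by
      have := (Complex.hasDerivAt_exp (a * (τ : ℂ))).comp (τ : ℂ)
        ((hasDerivAt_id ((τ : ℝ) : ℂ)).const_mul a)
      simpa [Function.comp_def, mul_one,
        mul_comm (Complex.exp (a * (τ : ℂ))) a] using this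
    exact comp_ofReal' h1
  -- derivative of F
  have hF : ∀ τ : ℝ, HasDerivAt F (F' τ) τ := by
    intro τ
    have hg := hasDerivAt_left L t τ
    have hf := hasDerivAt_right L τ
    have hM : HasDerivAt (fun τ : ℝ => g τ * α * f τ)
        (-(g τ * (L * α - α * L) * f τ)) τ := by
      have := (hg.mul_const α).mul hf
      refine this.congr_deriv ?_
      simp only [hgdef, hfdef]
      noncomm_ring
    have := (((mv u₀).restrictScalars ℝ).hasFDerivAt
      (x := g τ * α * f τ)).comp_hasDerivAt τ hM
    refine this.congr_deriv ?_
    show mv u₀ (-(g τ * (L * α - α * L) * f τ)) = _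
    rw [mv_apply, Matrix.neg_mulVec]
  -- continuity facts
  have contg : Continuous g := continuous_iff_continuousAt.2 fun τ =>
    (hasDerivAt_left L t τ).continuousAt
  have contf : Continuous f := continuous_iff_continuousAt.2 fun τ =>
    (hasDerivAt_right L τ).continuousAt
  have contF : Continuous F := continuous_iff_continuousAt.2 fun τ => (hF τ).continuousAt
  have contF' : Continuous F' := by
    have : Continuous fun τ => (mv u₀) (g τ * (L * α - α * L) * f τ) :=
      (mv u₀).continuous.comp ((contg.mul continuous_const).mul contf)
    have h := this.neg
    simp only [mv_apply] at h
    exact h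
  have contφ : Continuous φ := Complex.continuous_exp.comp
    (continuous_const.mul Complex.continuous_ofReal)
  -- the antiderivative
  set G : ℝ → (Fin n → ℂ) := fun τ => c • (φ τ • F τ) with hGdef
  have hG : ∀ τ : ℝ, HasDerivAt G (φ τ • F τ + c • (φ τ • F' τ)) τ := by
    intro τ
    have := ((hφ τ).smul (hF τ)).const_smul c
    refine this.congr_deriv ?_
    symm
    rw [smul_add, smul_smul, smul_smul, ← mul_assoc, inv_mul_cancel₀ ha0, one_mul]
    ring_nf
  have i1 : IntervalIntegrable (fun τ => φ τ • F τ) MeasureTheory.volume 0 t :=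
    (contφ.smul contF).intervalIntegrable _ _
  have i2 : IntervalIntegrable (fun τ => φ τ • F' τ) MeasureTheory.volume 0 t :=
    (contφ.smul contF').intervalIntegrable _ _
  have i3 : IntervalIntegrable (fun τ => c • (φ τ • F' τ)) MeasureTheory.volume 0 t :=
    ((contφ.smul contF').const_smul c).intervalIntegrable _ _
  have hint : (∫ τ in (0:ℝ)..t, (φ τ • F τ + c • (φ τ • F' τ))) = G t - G 0 :=
    intervalIntegral.integral_eq_sub_of_hasDerivAt (fun τ _ => hG τ) (i1.add i3)
  have hsplit : (∫ τ in (0:ℝ)..t, φ τ • F τ)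
      = G t - G 0 - c • ∫ τ in (0:ℝ)..t, φ τ • F' τ := by
    rw [eq_sub_iff_add_eq, ← intervalIntegral.integral_smul,
      ← intervalIntegral.integral_add i1 i3, hint]
  -- norms
  have hφnorm : ∀ τ : ℝ, ‖φ τ‖ = 1 := by
    intro τ
    simp only [hφdef, Complex.norm_exp, ha]
    norm_num [Complex.mul_re, Complex.mul_im]
  have hcnorm : ‖c‖ = 1 / (ω * |(m : ℝ)|) := by
    simp only [hc, ha, norm_inv, norm_mul, Complex.norm_I,
      Complex.norm_real, Real.norm_eq_abs, Complex.norm_intCast, one_mul, abs_of_pos hω, one_div]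
  set S : ℝ := ⨆ τ ∈ Set.Icc (0:ℝ) t,
      ‖(exp (((t : ℂ) - (τ : ℂ)) • L) * (L * α - α * L) * exp ((τ : ℂ) • L)).mulVec u₀‖
    with hSdef
  set v : ℝ → ℝ := fun τ : ℝ =>
      ‖(exp (((t : ℂ) - (τ : ℂ)) • L) * (L * α - α * L) *
        exp ((τ : ℂ) • L)).mulVec u₀‖ with hvdef
  have hSbdd : BddAbove (v '' Set.Icc 0 t) := by
    apply (isCompact_Icc.image _).bddAbove
    have : Continuous fun τ : ℝ => (mv u₀) (g τ * (L * α - α * L) * f τ) :=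
      (mv u₀).continuous.comp ((contg.mul continuous_const).mul contf)
    simpa [hvdef, hgdef, hfdef] using this.norm
  obtain ⟨B, hB⟩ := hSbdd
  have hbdd2 : BddAbove (Set.range fun τ : ℝ => ⨆ _ : τ ∈ Set.Icc (0:ℝ) t, v τ) := by
    refine ⟨max B 0, ?_⟩
    rintro x ⟨τ, rfl⟩
    show (⨆ _ : τ ∈ Set.Icc (0:ℝ) t, v τ) ≤ max B 0
    by_cases hτ : τ ∈ Set.Icc (0:ℝ) t
    · rw [ciSup_pos hτ]
      exact le_max_of_le_left (hB ⟨τ, hτ, rfl⟩)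
    · rw [ciSup_neg hτ, Real.sSup_empty]
      exact le_max_right _ _
  have hle : ∀ τ ∈ Set.Icc (0:ℝ) t, v τ ≤ S := by
    intro τ hτ
    have h2 := le_ciSup hbdd2 τ
    have h3 : (⨆ _ : τ ∈ Set.Icc (0:ℝ) t, v τ) = v τ := ciSup_pos hτ
    rw [h3] at h2
    exact h2
  have hF'le : ∀ x ∈ Set.uIoc (0:ℝ) t, ‖φ x • F' x‖ ≤ S := by
    intro x hx
    have hx' : x ∈ Set.Icc (0:ℝ) t := by
      rw [Set.uIoc_of_le ht.le] at hx
      exact Set.Ioc_subset_Icc_self hx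
    have h1 : ‖φ x • F' x‖ = v x := by
      rw [norm_smul, hφnorm, one_mul, hF'def, hvdef]
      simp [hgdef, hfdef]
    rw [h1]
    exact hle x hx'
  have hI2 : ‖∫ τ in (0:ℝ)..t, φ τ • F' τ‖ ≤ S * t := by
    have := intervalIntegral.norm_integral_le_of_norm_le_const hF'le
    simpa [abs_of_pos ht] using this
  have hS0 : 0 ≤ S :=
    le_trans (norm_nonneg _) (hle 0 ⟨le_refl _, ht.le⟩)
  -- put it together
  have hGt : ‖G t‖ = ‖c‖ * ‖(α * exp ((t : ℂ) • L)).mulVec u₀‖ := by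
    have hFt : F t = (α * exp ((t : ℂ) • L)).mulVec u₀ := by
      simp [hFdef, hgdef, hfdef]
    rw [hGdef]
    simp only [norm_smul, hφnorm, one_mul, hFt]
  have hG0 : ‖G 0‖ = ‖c‖ * ‖(exp ((t : ℂ) • L) * α).mulVec u₀‖ := by
    have hF0 : F 0 = (exp ((t : ℂ) • L) * α).mulVec u₀ := by
      simp [hFdef, hgdef, hfdef]
    rw [hGdef]
    simp only [norm_smul, hφnorm, one_mul, hF0]
  calc ‖∫ τ in (0:ℝ)..t, φ τ • F τ‖
      ≤ ‖G t‖ + ‖G 0‖ + ‖c • ∫ τ in (0:ℝ)..t, φ τ • F' τ‖ := by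
        rw [hsplit]
        exact (norm_sub_le _ _).trans (add_le_add (norm_sub_le _ _) le_rfl)
    _ ≤ ‖c‖ * ‖(α * exp ((t : ℂ) • L)).mulVec u₀‖
        + ‖c‖ * ‖(exp ((t : ℂ) • L) * α).mulVec u₀‖ + ‖c‖ * (S * t) := by
        rw [hGt, hG0, norm_smul]
        exact add_le_add le_rfl (mul_le_mul_of_nonneg_left hI2 (norm_nonneg _))
    _ = ‖c‖ * (‖(α * exp ((t : ℂ) • L)).mulVec u₀‖
        + ‖(exp ((t : ℂ) • L) * α).mulVec u₀‖ + t * S) := by ring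
    _ ≤ _ := by rw [hcnorm]
end
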